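/- Let K^T = ((X,τ₁),(Y,τ₂),R) be a CTSCR such that R is the graph of a homeomorphism from (X,τ₁) onto (Y,τ₂). Then every clopen object oriented protoconcept of K^T is a clopen object oriented semiconcept (so the two sets coincide), and on this set the operations satisfy ¬(A,B) = ⌟(A,B) and ¬¬(A,B) = (A,B) for every clopen protoconcept (A,B); consequently the algebra of clopen object oriented protoconcepts of K^T is a Boolean algebra. -/

import Mathlib

universe u v

/-- A double Boolean algebra (dBa). -/
structure DBA (D : Type u) where
  sup : D → D → D
  inf : D → D → D
  neg : D → D
  dneg : D → D
  top : D
  bot : D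
  ax1a : ∀ x y, inf (inf x x) y = inf x y
  ax2a : ∀ x y, inf x y = inf y x
  ax3a : ∀ x y z, inf x (inf y z) = inf (inf x y) z
  ax4a : ∀ x, neg (inf x x) = neg x
  ax5a : ∀ x y, inf x (sup x y) = inf x x
  ax6a : ∀ x y z, inf x (neg (inf (neg y) (neg z))) =
      neg (inf (neg (inf x y)) (neg (inf x z)))
  ax7a : ∀ x y, inf x (neg (inf (neg x) (neg y))) = inf x x
  ax8a : ∀ x y, neg (neg (inf x y)) = inf x y
  ax9a : ∀ x, inf x (neg x) = bot
  ax10a : neg bot = inf top top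
  ax11a : neg top = bot
  ax1b : ∀ x y, sup (sup x x) y = sup x y
  ax2b : ∀ x y, sup x y = sup y x
  ax3b : ∀ x y z, sup x (sup y z) = sup (sup x y) z
  ax4b : ∀ x, dneg (sup x x) = dneg x
  ax5b : ∀ x y, sup x (inf x y) = sup x x
  ax6b : ∀ x y z, sup x (dneg (sup (dneg y) (dneg z))) =
      dneg (sup (dneg (sup x y)) (dneg (sup x z)))
  ax7b : ∀ x y, sup x (dneg (sup (dneg x) (dneg y))) = sup x x
  ax8b : ∀ x y, dneg (dneg (sup x y)) = sup x y
  ax9b : ∀ x, sup x (dneg x) = top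
  ax10b : dneg top = sup bot bot
  ax11b : dneg bot = top
  ax12 : ∀ x, sup (inf x x) (inf x x) = inf (sup x x) (sup x x)

namespace DBA

variable {D : Type u} {E : Type v}

/-- x ∨ y := ¬(¬x ⊓ ¬y) -/
def vee (A : DBA D) (x y : D) : D := A.neg (A.inf (A.neg x) (A.neg y))

/-- x ∧ y := ⌟(⌟x ⊔ ⌟y) -/
def wedge (A : DBA D) (x y : D) : D := A.dneg (A.sup (A.dneg x) (A.dneg y))

/-- The quasi-order ⊑. -/
def le (A : DBA D) (x y : D) : Prop := A.inf x y = A.inf x x ∧ A.sup x y = A.sup y y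

def IsFilter (A : DBA D) (F : Set D) : Prop :=
  (∀ x ∈ F, ∀ y ∈ F, A.inf x y ∈ F) ∧ ∀ x ∈ F, ∀ z, A.le x z → z ∈ F

def IsIdeal (A : DBA D) (I : Set D) : Prop :=
  (∀ x ∈ I, ∀ y ∈ I, A.sup x y ∈ I) ∧ ∀ x ∈ I, ∀ z, A.le z x → z ∈ I

def IsPrimaryFilter (A : DBA D) (F : Set D) : Prop :=
  A.IsFilter F ∧ F ≠ Set.univ ∧ ∀ x, x ∈ F ∨ A.neg x ∈ F

def IsPrimaryIdeal (A : DBA D) (I : Set D) : Prop :=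
  A.IsIdeal I ∧ I ≠ Set.univ ∧ ∀ x, x ∈ I ∨ A.dneg x ∈ I

def Pure (A : DBA D) : Prop := ∀ x, A.inf x x = x ∨ A.sup x x = x

def Contextual (A : DBA D) : Prop := ∀ x y, A.le x y → A.le y x → x = y

def FullyContextual (A : DBA D) : Prop :=
  A.Contextual ∧
    ∀ y x, A.inf y y = y → A.sup x x = x → A.sup y y = A.inf x x →
      ∃! z, A.inf z z = y ∧ A.sup z z = x

/-- D_p = D_⊓ ∪ D_⊔ -/
def Dp (A : DBA D) : Set D := {x | A.inf x x = x} ∪ {x | A.sup x x = x}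

def IsHom (A : DBA D) (B : DBA E) (h : D → E) : Prop :=
  (∀ x y, h (A.inf x y) = B.inf (h x) (h y)) ∧
  (∀ x y, h (A.sup x y) = B.sup (h x) (h y)) ∧
  (∀ x, h (A.neg x) = B.neg (h x)) ∧
  (∀ x, h (A.dneg x) = B.dneg (h x)) ∧
  h A.top = B.top ∧ h A.bot = B.bot

def IsHomOn (A : DBA D) (B : DBA E) (S : Set D) (h : D → E) : Prop :=
  (∀ x ∈ S, ∀ y ∈ S, h (A.inf x y) = B.inf (h x) (h y)) ∧
  (∀ x ∈ S, ∀ y ∈ S, h (A.sup x y) = B.sup (h x) (h y)) ∧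
  (∀ x ∈ S, h (A.neg x) = B.neg (h x)) ∧
  (∀ x ∈ S, h (A.dneg x) = B.dneg (h x)) ∧
  h A.top = B.top ∧ h A.bot = B.bot

end DBA

section FCA

variable {G : Type u} {M : Type v}

/-- B^◇ -/
def odia (R : G → M → Prop) (B : Set M) : Set G := {g | ∃ m ∈ B, R g m}
/-- B^□ -/
def obox (R : G → M → Prop) (B : Set M) : Set G := {g | ∀ m, R g m → m ∈ B}
/-- A^◆ -/
def obdia (R : G → M → Prop) (A : Set G) : Set M := {m | ∃ g ∈ A, R g m}
/-- A^■ -/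
def obbox (R : G → M → Prop) (A : Set G) : Set M := {m | ∀ g, R g m → g ∈ A}

def pinf (R : G → M → Prop) (p q : Set G × Set M) : Set G × Set M :=
  (p.1 ∪ q.1, obbox R (p.1 ∪ q.1))
def psup (R : G → M → Prop) (p q : Set G × Set M) : Set G × Set M :=
  (odia R (p.2 ∩ q.2), p.2 ∩ q.2)
def pneg (R : G → M → Prop) (p : Set G × Set M) : Set G × Set M :=
  (p.1ᶜ, obbox R p.1ᶜ)
def pdneg (R : G → M → Prop) (p : Set G × Set M) : Set G × Set M :=
  (odia R p.2ᶜ, p.2ᶜ)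
def ptop : Set G × Set M := (∅, ∅)
def pbot : Set G × Set M := (Set.univ, Set.univ)
/-- quasi-order on pairs: (A,B) ⊑ (C,D) iff C ⊆ A and D ⊆ B -/
def ple (p q : Set G × Set M) : Prop := q.1 ⊆ p.1 ∧ q.2 ⊆ p.2

/-- object oriented protoconcept -/
def IsProto (R : G → M → Prop) (p : Set G × Set M) : Prop :=
  odia R (obbox R p.1) = odia R p.2
/-- object oriented semiconcept -/
def IsSemi (R : G → M → Prop) (p : Set G × Set M) : Prop :=
  obbox R p.1 = p.2 ∨ odia R p.2 = p.1

/-- continuity of the relation R -/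
def ContRel [TopologicalSpace G] [TopologicalSpace M] (R : G → M → Prop) : Prop :=
  ∀ O : Set M, IsOpen O → IsOpen (odia R O) ∧ IsOpen (obox R O)
/-- continuity of the converse relation R⁻¹ -/
def ContRelInv [TopologicalSpace G] [TopologicalSpace M] (R : G → M → Prop) : Prop :=
  ∀ O : Set G, IsOpen O → IsOpen (obdia R O) ∧ IsOpen (obbox R O)

def IsClopenProto [TopologicalSpace G] [TopologicalSpace M] (R : G → M → Prop)
    (p : Set G × Set M) : Prop :=
  IsProto R p ∧ IsClopen p.1 ∧ IsClopen p.2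

def IsClopenSemi [TopologicalSpace G] [TopologicalSpace M] (R : G → M → Prop)
    (p : Set G × Set M) : Prop :=
  IsSemi R p ∧ IsClopen p.1 ∧ IsClopen p.2

def pmap {G' : Type*} {M' : Type*} (α : G → G') (β : M → M') (p : Set G' × Set M') :
    Set G × Set M := (α ⁻¹' p.1, β ⁻¹' p.2)

end FCA

section StoneDBA

variable {D : Type u}

/-- the set of primary filters of a dBa, as a type -/
def PrimF (A : DBA D) : Type u := {F : Set D // A.IsPrimaryFilter F}
/-- the set of primary ideals of a dBa, as a type -/
def PrimI (A : DBA D) : Type u := {I : Set D // A.IsPrimaryIdeal I}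
/-- F ∇ I iff F ∩ I = ∅ -/
def nabla (A : DBA D) : PrimF A → PrimI A → Prop := fun F I => F.val ∩ I.val = ∅
/-- F_x -/
def Fset (A : DBA D) (x : D) : Set (PrimF A) := {F | x ∈ F.val}
/-- I_x -/
def Iset (A : DBA D) (x : D) : Set (PrimI A) := {I | x ∈ I.val}

/-- the topology T on primary filters, with the F_x as a subbase of closed sets -/
def filtTop (A : DBA D) : TopologicalSpace (PrimF A) :=
  TopologicalSpace.generateFrom {U | ∃ x : D, U = (Fset A x)ᶜ}
/-- the topology J on primary ideals, with the I_x as a subbase of closed sets -/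
def idlTop (A : DBA D) : TopologicalSpace (PrimI A) :=
  TopologicalSpace.generateFrom {U | ∃ x : D, U = (Iset A x)ᶜ}

/-- the map h(x) := (F_{¬x}, I_x) -/
def protoEmb (A : DBA D) (x : D) : Set (PrimF A) × Set (PrimI A) :=
  (Fset A (A.neg x), Iset A x)

end StoneDBA

section SemiPrim

variable {G : Type u} {M : Type v} [TopologicalSpace G] [TopologicalSpace M]

/-- a primary filter of the dBa of clopen object oriented semiconcepts -/
def IsSemiPrimFilter (R : G → M → Prop) (F : Set (Set G × Set M)) : Prop :=
  (∀ p ∈ F, IsClopenSemi R p) ∧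
  (∀ p ∈ F, ∀ q ∈ F, pinf R p q ∈ F) ∧
  (∀ p ∈ F, ∀ z, IsClopenSemi R z → ple p z → z ∈ F) ∧
  F ≠ {p | IsClopenSemi R p} ∧
  (∀ p, IsClopenSemi R p → (p ∈ F ∨ pneg R p ∈ F))

/-- a primary ideal of the dBa of clopen object oriented semiconcepts -/
def IsSemiPrimIdeal (R : G → M → Prop) (I : Set (Set G × Set M)) : Prop :=
  (∀ p ∈ I, IsClopenSemi R p) ∧
  (∀ p ∈ I, ∀ q ∈ I, psup R p q ∈ I) ∧
  (∀ p ∈ I, ∀ z, IsClopenSemi R z → ple z p → z ∈ I) ∧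
  I ≠ {p | IsClopenSemi R p} ∧
  (∀ p, IsClopenSemi R p → (p ∈ I ∨ pdneg R p ∈ I))

def SemiPF (R : G → M → Prop) := {F : Set (Set G × Set M) // IsSemiPrimFilter R F}
def SemiPI (R : G → M → Prop) := {I : Set (Set G × Set M) // IsSemiPrimIdeal R I}

def semiPFTop (R : G → M → Prop) : TopologicalSpace (SemiPF R) :=
  TopologicalSpace.generateFrom
    {U | ∃ p, IsClopenSemi R p ∧ U = {F : SemiPF R | p ∈ F.val}ᶜ}
def semiPITop (R : G → M → Prop) : TopologicalSpace (SemiPI R) :=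
  TopologicalSpace.generateFrom
    {U | ∃ p, IsClopenSemi R p ∧ U = {I : SemiPI R | p ∈ I.val}ᶜ}

end SemiPrim

/-- For a CTSCR whose relation is the graph of a homeomorphism, clopen
protoconcepts and clopen semiconcepts coincide, ¬ = ⌟ and ¬¬ = id on them, and the
algebra of clopen object oriented protoconcepts is a Boolean algebra. -/
theorem stmt8 {X : Type u} {Y : Type v} [TopologicalSpace X] [TopologicalSpace Y]
    (R : X → Y → Prop) (e : X ≃ₜ Y) (hgraph : ∀ g m, R g m ↔ e g = m)
    (hR : ContRel R) (hRinv : ContRelInv R) :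
    (∀ p : Set X × Set Y, IsClopenProto R p ↔ IsClopenSemi R p) ∧
    (∀ p : Set X × Set Y, IsClopenProto R p →
        pneg R p = pdneg R p ∧ pneg R (pneg R p) = p) ∧
    ∃ B : BooleanAlgebra {p : Set X × Set Y // IsClopenProto R p},
      (∀ p q, (B.inf p q).val = pinf R p.val q.val) ∧
      (∀ p q, (B.sup p q).val = psup R p.val q.val) ∧
      (∀ p, (B.compl p).val = pneg R p.val) ∧
      B.top.val = (ptop : Set X × Set Y) ∧
      B.bot.val = (pbot : Set X × Set Y) := by
  have hodia : ∀ B : Set Y, odia R B = e ⁻¹' B := by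
    intro B; ext g
    simp only [odia, Set.mem_setOf_eq, Set.mem_preimage]
    constructor
    · rintro ⟨m, hm, hR'⟩; rw [hgraph] at hR'; rwa [hR']
    · intro h; exact ⟨e g, h, (hgraph _ _).mpr rfl⟩
  have hobbox : ∀ A : Set X, obbox R A = e.symm ⁻¹' A := by
    intro A; ext m
    simp only [obbox, Set.mem_setOf_eq, Set.mem_preimage]
    constructor
    · intro h; exact h _ ((hgraph _ _).mpr (e.apply_symm_apply m))
    · intro h g hg; rw [hgraph] at hg; subst hg; simpa using h
  have cancel1 : ∀ A : Set X, e ⁻¹' (e.symm ⁻¹' A) = A := by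
    intro A; ext g; simp
  have cancel2 : ∀ B : Set Y, e.symm ⁻¹' (e ⁻¹' B) = B := by
    intro B; ext m; simp
  have hproto : ∀ p : Set X × Set Y, IsProto R p ↔ p.1 = e ⁻¹' p.2 := by
    intro p
    unfold IsProto
    rw [hodia, hodia, hobbox, cancel1]
  have hsemi : ∀ p : Set X × Set Y, IsSemi R p ↔ p.1 = e ⁻¹' p.2 := by
    intro p
    unfold IsSemi
    rw [hodia, hobbox]
    constructor
    · rintro (h | h)
      · rw [← h]; exact (cancel1 p.1).symm
      · exact h.symm
    · intro h; right; exact h.symm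
  have key : ∀ p : Set X × Set Y,
      IsClopenProto R p ↔ (p.1 = e ⁻¹' p.2 ∧ IsClopen p.1 ∧ IsClopen p.2) := by
    intro p
    unfold IsClopenProto
    rw [hproto]
  have keyS : ∀ p : Set X × Set Y,
      IsClopenSemi R p ↔ (p.1 = e ⁻¹' p.2 ∧ IsClopen p.1 ∧ IsClopen p.2) := by
    intro p
    unfold IsClopenSemi
    rw [hsemi]
  refine ⟨fun p => (key p).trans (keyS p).symm, ?_, ?_⟩
  · intro p hp
    obtain ⟨h1, _, _⟩ := (key p).mp hp
    have hc : p.1ᶜ = e ⁻¹' p.2ᶜ := by rw [h1, Set.preimage_compl]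
    constructor
    · unfold pneg pdneg
      rw [hodia, hobbox, ← hc, hc, cancel2]
    · unfold pneg
      rw [hobbox, hobbox]
      refine Prod.ext (by simp) ?_
      simp only [compl_compl]
      rw [h1, cancel2]
  · -- Boolean algebra
    letI instMax : Max {p : Set X × Set Y // IsClopenProto R p} :=
      ⟨fun p q => ⟨psup R p.val q.val, by
        rw [key]
        obtain ⟨p1, _, pc2⟩ := (key _).mp p.2
        obtain ⟨q1, _, qc2⟩ := (key _).mp q.2
        refine ⟨hodia _, ?_, pc2.inter qc2⟩
        unfold psup
        rw [hodia]
        exact (pc2.inter qc2).preimage e.continuous⟩⟩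
    letI instMin : Min {p : Set X × Set Y // IsClopenProto R p} :=
      ⟨fun p q => ⟨pinf R p.val q.val, by
        rw [key]
        obtain ⟨p1, pc1, _⟩ := (key _).mp p.2
        obtain ⟨q1, qc1, _⟩ := (key _).mp q.2
        unfold pinf
        rw [hobbox]
        exact ⟨(cancel1 _).symm, pc1.union qc1,
          (pc1.union qc1).preimage e.symm.continuous⟩⟩⟩
    letI instTop : Top {p : Set X × Set Y // IsClopenProto R p} :=
      ⟨⟨ptop, by rw [key]; exact ⟨by simp [ptop], isClopen_empty, isClopen_empty⟩⟩⟩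
    letI instBot : Bot {p : Set X × Set Y // IsClopenProto R p} :=
      ⟨⟨pbot, by rw [key]; exact ⟨by simp [pbot], isClopen_univ, isClopen_univ⟩⟩⟩
    letI instCompl : Compl {p : Set X × Set Y // IsClopenProto R p} :=
      ⟨fun p => ⟨pneg R p.val, by
        rw [key]
        obtain ⟨p1, pc1, _⟩ := (key _).mp p.2
        unfold pneg
        rw [hobbox]
        exact ⟨(cancel1 _).symm, pc1.compl,
          pc1.compl.preimage e.symm.continuous⟩⟩⟩
    letI instSDiff : SDiff {p : Set X × Set Y // IsClopenProto R p} :=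
      ⟨fun p q => p ⊓ qᶜ⟩
    letI instHImp : HImp {p : Set X × Set Y // IsClopenProto R p} :=
      ⟨fun p q => pᶜ ⊔ q⟩
    let f : {p : Set X × Set Y // IsClopenProto R p} → (Set Y)ᵒᵈ :=
      fun p => OrderDual.toDual p.val.2
    have hinj : Function.Injective f := by
      intro p q h
      have h2 : p.val.2 = q.val.2 := h
      obtain ⟨p1, _, _⟩ := (key _).mp p.2
      obtain ⟨q1, _, _⟩ := (key _).mp q.2
      apply Subtype.ext
      apply Prod.ext _ h2
      rw [p1, q1, h2]
    have snd_eq : ∀ p : {p : Set X × Set Y // IsClopenProto R p},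
        e.symm ⁻¹' p.val.1 = p.val.2 := by
      intro p
      obtain ⟨p1, _, _⟩ := (key _).mp p.2
      rw [p1, cancel2]
    have map_sup : ∀ p q, f (p ⊔ q) = f p ⊔ f q := by
      intro p q; rfl
    have map_inf : ∀ p q, f (p ⊓ q) = f p ⊓ f q := by
      intro p q
      show OrderDual.toDual (obbox R (p.val.1 ∪ q.val.1)) = _
      rw [hobbox]
      have : e.symm ⁻¹' (p.val.1 ∪ q.val.1)
          = e.symm ⁻¹' p.val.1 ∪ e.symm ⁻¹' q.val.1 := Set.preimage_union
      rw [this, snd_eq, snd_eq]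
      rfl
    have map_compl : ∀ p, f pᶜ = (f p)ᶜ := by
      intro p
      show OrderDual.toDual (obbox R p.val.1ᶜ) = _
      rw [hobbox]
      have : e.symm ⁻¹' p.val.1ᶜ = (e.symm ⁻¹' p.val.1)ᶜ := Set.preimage_compl
      rw [this, snd_eq]
      rfl
    letI instLE : LE {p : Set X × Set Y // IsClopenProto R p} := ⟨fun p q => f p ≤ f q⟩
    letI instLT : LT {p : Set X × Set Y // IsClopenProto R p} := ⟨fun p q => f p < f q⟩
    have map_top : f ⊤ = ⊤ := rfl
    have map_bot : f ⊥ = ⊥ := rfl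
    refine ⟨Function.Injective.booleanAlgebra f hinj Iff.rfl Iff.rfl map_sup map_inf map_top map_bot
      map_compl (fun p q => ?_) (fun p q => ?_), fun p q => rfl, fun p q => rfl,
      fun p => rfl, rfl, rfl⟩
    · show f (p ⊓ qᶜ) = f p \ f q
      rw [map_inf, map_compl, sdiff_eq]
    · show f (pᶜ ⊔ q) = f p ⇨ f q
      rw [map_sup, map_compl, himp_eq, sup_comm]
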